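/- (Theorem 2, GO-MSE version.) Let (w_1, x_1), …, (w_M, x_M) be pairs of vectors in ℝ^K and define the K×K real symmetric matrix C = (1/M) ∑_{j=1}^{M} (x_j x_jᵀ w_j w_jᵀ + w_j w_jᵀ x_j x_jᵀ), with eigenvalues sorted decreasingly and corresponding orthonormal eigenvectors v_1, …, v_K. Fix L ≤ K and for an orthonormal family p_1, …, p_L write x̃_j = ∑_{i=1}^{L} ⟨p_i, x_j⟩ p_i and define the GO-MSE upper bound B(p) = 2·(1/M) ∑_j ‖w_j‖²‖x_j‖² − 2·(1/M) ∑_j ⟨w_j, x_j⟩⟨w_j, x̃_j⟩. Then B(p) = 2·(1/M) ∑_j ‖w_j‖²‖x_j‖² − ∑_{i=1}^{L} p_iᵀ C p_i, and B is minimized over all orthonormal families p_1, …, p_L of size L by taking p_i = v_i, the L principal eigenvectors of C. -/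

import Mathlib

open scoped RealInnerProductSpace
open Matrix

/-- The GO-MSE upper bound `B(p)` from Proposition 1, as an empirical average
over the `M` sample pairs `(w_j, x_j)`. -/
noncomputable def goBound (K L M : ℕ) (w x : Fin M → EuclideanSpace ℝ (Fin K))
    (p : Fin L → EuclideanSpace ℝ (Fin K)) : ℝ :=
  2 * ((M : ℝ)⁻¹ * ∑ j, ‖w j‖ ^ 2 * ‖x j‖ ^ 2)
    - 2 * ((M : ℝ)⁻¹ * ∑ j, ⟪w j, x j⟫ * ⟪w j, ∑ i, ⟪p i, x j⟫ • p i⟫)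

private lemma inner_eq_dot {K : ℕ} (a b : EuclideanSpace ℝ (Fin K)) :
    ⟪a, b⟫ = a ⬝ᵥ b := by
  simp [PiLp.inner_apply, RCLike.inner_apply, dotProduct, mul_comm]

private lemma vecMulVec_mulVec' {K : ℕ} (a b z : Fin K → ℝ) :
    vecMulVec a b *ᵥ z = (b ⬝ᵥ z) • a := by
  funext i
  simp [mulVec, vecMulVec_apply, dotProduct, Finset.sum_mul, Finset.mul_sum, mul_comm,
    mul_assoc, mul_left_comm]

private lemma dot_sum {K : ℕ} {ι : Type*} (t : Finset ι) (u : Fin K → ℝ)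
    (f : ι → Fin K → ℝ) :
    u ⬝ᵥ (∑ j ∈ t, f j) = ∑ j ∈ t, u ⬝ᵥ f j := by
  simp only [dotProduct, Finset.sum_apply, Finset.mul_sum]
  exact Finset.sum_comm

private lemma sum_mulVec' {K : ℕ} {ι : Type*} (t : Finset ι)
    (A : ι → Matrix (Fin K) (Fin K) ℝ) (u : Fin K → ℝ) :
    (∑ j ∈ t, A j) *ᵥ u = ∑ j ∈ t, A j *ᵥ u := by
  funext i
  simp only [mulVec, dotProduct, Finset.sum_apply, Matrix.sum_apply, Finset.sum_mul]
  exact Finset.sum_comm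

private lemma quad_term {K : ℕ} (a b u : Fin K → ℝ) :
    u ⬝ᵥ ((vecMulVec a a * vecMulVec b b) *ᵥ u)
      = (u ⬝ᵥ a) * (a ⬝ᵥ b) * (u ⬝ᵥ b) := by
  rw [← mulVec_mulVec, vecMulVec_mulVec', vecMulVec_mulVec',
    dotProduct_smul, dotProduct_smul, dotProduct_comm b u]
  simp only [smul_eq_mul]
  ring

private lemma quad_eq {K M : ℕ} (w x : Fin M → EuclideanSpace ℝ (Fin K))
    (C : Matrix (Fin K) (Fin K) ℝ)
    (hC : C = (M : ℝ)⁻¹ • ∑ j,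
      (vecMulVec (x j) (x j) * vecMulVec (w j) (w j)
        + vecMulVec (w j) (w j) * vecMulVec (x j) (x j)))
    (u : EuclideanSpace ℝ (Fin K)) :
    u ⬝ᵥ (C *ᵥ u)
      = 2 * ((M : ℝ)⁻¹ * ∑ j, (w j ⬝ᵥ x j) * ((u ⬝ᵥ x j) * (u ⬝ᵥ w j))) := by
  subst hC
  rw [smul_mulVec, dotProduct_smul]
  rw [sum_mulVec', dot_sum]
  rw [Finset.mul_sum, Finset.mul_sum, smul_eq_mul, Finset.mul_sum]
  refine Finset.sum_congr rfl fun j _ => ?_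
  rw [add_mulVec, dotProduct_add, quad_term, quad_term,
    dotProduct_comm (w j : Fin K → ℝ) (x j)]
  ring

theorem stmt_10 (K L M : ℕ) (hL : L ≤ K)
    (w x : Fin M → EuclideanSpace ℝ (Fin K))
    (C : Matrix (Fin K) (Fin K) ℝ)
    (hC : C = (M : ℝ)⁻¹ • ∑ j,
      (vecMulVec (x j) (x j) * vecMulVec (w j) (w j)
        + vecMulVec (w j) (w j) * vecMulVec (x j) (x j)))
    (lam : Fin K → ℝ) (hsort : ∀ i j : Fin K, i ≤ j → lam j ≤ lam i)
    (v : Fin K → EuclideanSpace ℝ (Fin K)) (hv : Orthonormal ℝ v)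
    (heig : ∀ i : Fin K, C *ᵥ (v i) = lam i • (v i)) :
    ∀ p : Fin L → EuclideanSpace ℝ (Fin K), Orthonormal ℝ p →
      (goBound K L M w x p
        = 2 * ((M : ℝ)⁻¹ * ∑ j, ‖w j‖ ^ 2 * ‖x j‖ ^ 2)
          - ∑ i : Fin L, (p i) ⬝ᵥ (C *ᵥ (p i))) ∧
      goBound K L M w x (fun i => v (Fin.castLE hL i)) ≤ goBound K L M w x p := by
  -- the identity, for an arbitrary family (orthonormality not needed)
  have identity : ∀ p : Fin L → EuclideanSpace ℝ (Fin K),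
      goBound K L M w x p
        = 2 * ((M : ℝ)⁻¹ * ∑ j, ‖w j‖ ^ 2 * ‖x j‖ ^ 2)
          - ∑ i : Fin L, (p i) ⬝ᵥ (C *ᵥ (p i)) := by
    intro p
    unfold goBound
    congr 1
    have hexp : ∀ j, ⟪w j, ∑ i, ⟪p i, x j⟫ • p i⟫
        = ∑ i, ⟪p i, x j⟫ * ⟪w j, p i⟫ := by
      intro j
      rw [inner_sum]
      exact Finset.sum_congr rfl fun i _ => real_inner_smul_right _ _ _
    have hterm : ∀ j, ⟪w j, x j⟫ * ⟪w j, ∑ i, ⟪p i, x j⟫ • p i⟫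
        = ∑ i : Fin L, (w j ⬝ᵥ x j) * ((p i ⬝ᵥ x j) * (p i ⬝ᵥ w j)) := by
      intro j
      rw [hexp j, Finset.mul_sum]
      refine Finset.sum_congr rfl fun i _ => ?_
      simp only [inner_eq_dot]
      rw [dotProduct_comm (w j) (p i)]
    calc 2 * ((M : ℝ)⁻¹ * ∑ j, ⟪w j, x j⟫ * ⟪w j, ∑ i, ⟪p i, x j⟫ • p i⟫)
        = ∑ i : Fin L, 2 * ((M : ℝ)⁻¹
            * ∑ j, (w j ⬝ᵥ x j) * ((p i ⬝ᵥ x j) * (p i ⬝ᵥ w j))) := by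
          rw [Finset.sum_congr rfl fun j _ => hterm j, Finset.sum_comm]
          simp only [Finset.mul_sum]
      _ = ∑ i : Fin L, (p i) ⬝ᵥ (C *ᵥ (p i)) := by
          exact Finset.sum_congr rfl fun i _ => (quad_eq w x C hC (p i)).symm
  intro p hp
  refine ⟨identity p, ?_⟩
  -- expansion of any vector in the eigenbasis
  have hu : ∀ u : EuclideanSpace ℝ (Fin K), ∑ k, ⟪v k, u⟫ • v k = u := by
    rcases Nat.eq_zero_or_pos K with hK | hK
    · subst hK
      intro u
      ext i
      exact i.elim0
    · haveI : Nonempty (Fin K) := ⟨⟨0, hK⟩⟩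
      have hcard : Fintype.card (Fin K)
          = Module.finrank ℝ (EuclideanSpace ℝ (Fin K)) := by
        simp
      let b0 : Module.Basis (Fin K) ℝ (EuclideanSpace ℝ (Fin K)) :=
        basisOfLinearIndependentOfCardEqFinrank hv.linearIndependent hcard
      have hb0 : ⇑b0 = v := coe_basisOfLinearIndependentOfCardEqFinrank _ _
      let b : OrthonormalBasis (Fin K) ℝ (EuclideanSpace ℝ (Fin K)) :=
        b0.toOrthonormalBasis (by rwa [hb0])
      have hb : ⇑b = v := by
        rw [show ⇑b = ⇑b0 from Module.Basis.coe_toOrthonormalBasis _ _, hb0]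
      intro u
      have := b.sum_repr' u
      rwa [hb] at this
  -- spectral form of the quadratic form
  have quad_spec : ∀ u : EuclideanSpace ℝ (Fin K),
      u ⬝ᵥ (C *ᵥ u) = ∑ k, lam k * ⟪v k, u⟫ ^ 2 := by
    intro u
    have hCu : C *ᵥ u = ∑ k, ⟪v k, u⟫ • (lam k • (v k : Fin K → ℝ)) := by
      conv_lhs => rw [← hu u]
      have : ∀ z : EuclideanSpace ℝ (Fin K), C *ᵥ z = C.mulVecLin z := fun _ => rfl
      rw [this, WithLp.ofLp_sum, map_sum]
      refine Finset.sum_congr rfl fun k _ => ?_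
      rw [WithLp.ofLp_smul, LinearMap.map_smul]
      simp only [Matrix.mulVecLin_apply]
      rw [heig k]
    rw [hCu, dot_sum]
    refine Finset.sum_congr rfl fun k _ => ?_
    rw [smul_smul, dotProduct_smul, smul_eq_mul, dotProduct_comm, ← inner_eq_dot]
    ring
  -- Parseval
  have parseval : ∀ u : EuclideanSpace ℝ (Fin K),
      ∑ k, ⟪v k, u⟫ ^ 2 = ‖u‖ ^ 2 := by
    intro u
    have h := congrArg (fun y => ⟪y, u⟫) (hu u)
    simp only [sum_inner, real_inner_smul_left] at h
    rw [real_inner_self_eq_norm_sq] at h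
    rw [← h]
    exact Finset.sum_congr rfl fun k _ => pow_two _
  -- Bessel
  have bessel : ∀ k : Fin K, ∑ i : Fin L, ⟪v k, p i⟫ ^ 2 ≤ 1 := by
    intro k
    have h := hp.sum_inner_products_le (v k) (s := Finset.univ)
    rw [hv.1 k] at h
    simp only [Real.norm_eq_abs, sq_abs, one_pow] at h
    calc ∑ i : Fin L, ⟪v k, p i⟫ ^ 2
        = ∑ i : Fin L, ⟪p i, v k⟫ ^ 2 := by
          exact Finset.sum_congr rfl fun i _ => by rw [real_inner_comm]
      _ ≤ 1 := h
  -- set s_k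
  set s : Fin K → ℝ := fun k => ∑ i : Fin L, ⟪v k, p i⟫ ^ 2 with hs
  have hs0 : ∀ k, 0 ≤ s k := fun k =>
    Finset.sum_nonneg fun i _ => sq_nonneg _
  have hs1 : ∀ k, s k ≤ 1 := bessel
  -- the index set
  set S : Finset (Fin K) := Finset.image (Fin.castLE hL) Finset.univ with hSdef
  have hmemS : ∀ k : Fin K, k ∈ S ↔ (k : ℕ) < L := by
    intro k
    simp only [hSdef, Finset.mem_image, Finset.mem_univ, true_and]
    constructor
    · rintro ⟨i, rfl⟩; exact i.isLt
    · intro h; exact ⟨⟨(k : ℕ), h⟩, Fin.ext rfl⟩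
  have hScard : S.card = L := by
    rw [hSdef, Finset.card_image_of_injective _ (Fin.castLE_injective hL),
      Finset.card_univ, Fintype.card_fin]
  have hsumS : ∀ f : Fin K → ℝ, ∑ i : Fin L, f (Fin.castLE hL i) = ∑ k ∈ S, f k := by
    intro f
    rw [hSdef, Finset.sum_image (fun a _ b _ h => Fin.castLE_injective hL h)]
  have hsum : ∑ k, s k = (S.card : ℝ) := by
    rw [hScard]
    simp only [hs]
    rw [Finset.sum_comm]
    have : ∀ i : Fin L, ∑ k, ⟪v k, p i⟫ ^ 2 = 1 := by
      intro i
      rw [parseval, hp.1 i, one_pow]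
    rw [Finset.sum_congr rfl fun i _ => this i]
    simp
  -- the right hand side: eigenvector value
  have hquadv : ∀ i : Fin L,
      (v (Fin.castLE hL i)) ⬝ᵥ (C *ᵥ (v (Fin.castLE hL i))) = lam (Fin.castLE hL i) := by
    intro i
    rw [quad_spec]
    have hvo := orthonormal_iff_ite.mp hv
    calc ∑ k, lam k * ⟪v k, v (Fin.castLE hL i)⟫ ^ 2
        = ∑ k, if k = Fin.castLE hL i then lam k else 0 := by
          refine Finset.sum_congr rfl fun k _ => ?_
          rw [hvo k (Fin.castLE hL i)]
          by_cases h : k = Fin.castLE hL i <;> simp [h]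
      _ = lam (Fin.castLE hL i) := by simp
  -- key: Ky Fan type bound
  have keyineq : ∑ i : Fin L, (p i) ⬝ᵥ (C *ᵥ (p i)) ≤ ∑ k ∈ S, lam k := by
    have lhseq : ∑ i : Fin L, (p i) ⬝ᵥ (C *ᵥ (p i)) = ∑ k, lam k * s k := by
      simp only [quad_spec, hs]
      rw [Finset.sum_comm]
      exact Finset.sum_congr rfl fun k _ => by rw [Finset.mul_sum]
    rw [lhseq]
    rcases Nat.eq_zero_or_pos L with hL0 | hL0
    · -- L = 0 : S empty, and sum s = 0 forces each s k = 0
      haveI : IsEmpty (Fin L) := by rw [hL0]; infer_instance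
      have hSempty : S = ∅ := by
        ext k; simp [hmemS k, hL0]
      have hse : ∀ k, s k = 0 := by
        intro k
        simp [hs]
      simp [hSempty, hse]
    · -- L ≥ 1, threshold t = lam (L-1)
      have hlt : L - 1 < K := lt_of_lt_of_le (Nat.sub_lt hL0 one_pos) hL
      set t : ℝ := lam ⟨L - 1, hlt⟩ with ht
      have hin : ∀ k ∈ S, t ≤ lam k := by
        intro k hk
        refine hsort k ⟨L - 1, hlt⟩ ?_
        have hkL : (k : ℕ) < L := (hmemS k).mp hk
        simp only [Fin.le_def]
        omega
      have hout : ∀ k ∉ S, lam k ≤ t := by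
        intro k hk
        refine hsort ⟨L - 1, hlt⟩ k ?_
        have hkL : ¬ (k : ℕ) < L := fun h => hk ((hmemS k).mpr h)
        simp only [Fin.le_def]
        omega
      -- Abel-type rearrangement
      have h2 : ∑ k, lam k * s k = ∑ k ∈ S, lam k * s k + ∑ k ∈ Sᶜ, lam k * s k :=
        (Finset.sum_add_sum_compl S _).symm
      have h3 : ∑ k, s k = ∑ k ∈ S, s k + ∑ k ∈ Sᶜ, s k :=
        (Finset.sum_add_sum_compl S _).symm
      have hA : 0 ≤ ∑ k ∈ S, (lam k - t) * (1 - s k) :=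
        Finset.sum_nonneg fun k hk =>
          mul_nonneg (by linarith [hin k hk]) (by linarith [hs1 k])
      have hB : 0 ≤ ∑ k ∈ Sᶜ, (t - lam k) * s k :=
        Finset.sum_nonneg fun k hk =>
          mul_nonneg (by linarith [hout k (Finset.mem_compl.mp hk)]) (hs0 k)
      have e1 : ∑ k ∈ S, (lam k - t) * (1 - s k)
          = (∑ k ∈ S, lam k) - (S.card : ℝ) * t - (∑ k ∈ S, lam k * s k)
            + t * (∑ k ∈ S, s k) := by
        rw [Finset.sum_congr rfl (fun k _ =>
          show (lam k - t) * (1 - s k)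
            = lam k - t - lam k * s k + t * s k from by ring)]
        rw [Finset.sum_add_distrib, Finset.sum_sub_distrib, Finset.sum_sub_distrib,
          Finset.sum_const, ← Finset.mul_sum]
        simp [nsmul_eq_mul]
      have e2 : ∑ k ∈ Sᶜ, (t - lam k) * s k
          = t * (∑ k ∈ Sᶜ, s k) - ∑ k ∈ Sᶜ, lam k * s k := by
        rw [Finset.sum_congr rfl (fun k _ =>
          show (t - lam k) * s k = t * s k - lam k * s k from by ring)]
        rw [Finset.sum_sub_distrib, ← Finset.mul_sum]
      have e3 : t * (∑ k ∈ S, s k) + t * (∑ k ∈ Sᶜ, s k) = (S.card : ℝ) * t := by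
        have h4 : (∑ k ∈ S, s k) + (∑ k ∈ Sᶜ, s k) = (S.card : ℝ) := by
          rw [← h3, hsum]
        calc t * (∑ k ∈ S, s k) + t * (∑ k ∈ Sᶜ, s k)
            = t * ((∑ k ∈ S, s k) + (∑ k ∈ Sᶜ, s k)) := by ring
          _ = t * (S.card : ℝ) := by rw [h4]
          _ = (S.card : ℝ) * t := by ring
      linarith [hA, hB, e1, e2, e3, h2]
  -- conclude
  rw [identity p, identity (fun i => v (Fin.castLE hL i))]
  have : ∑ i : Fin L, (v (Fin.castLE hL i)) ⬝ᵥ (C *ᵥ (v (Fin.castLE hL i)))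
      = ∑ k ∈ S, lam k := by
    rw [Finset.sum_congr rfl fun i _ => hquadv i]
    exact hsumS lam
  linarith [keyineq, this.ge, this.le]
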